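/- For every n ≥ 3, the ℚ-algebra endomorphism u of the exterior algebra Λ_n determined by u(e_{{i,j}}) = e_{{i,j}} + e_{{i−1,j+1}} − e_{{i−1,j}} − e_{{i,j+1}} (terms whose index pair does not lie in C_n being omitted) is bijective, i.e. an algebra automorphism of Λ_n. -/

import Mathlib

open scoped BigOperators

/-- `ChordP n p` says that the ordered pair `p = (i, j)` represents a chord of the standard
`n`-gon, i.e. an element `{i, j}` of `C_n`: `1 ≤ i < j ≤ n - 1` and `(i, j) ≠ (1, n - 1)`. -/
def ChordP (n : ℕ) (p : ℕ × ℕ) : Prop :=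
  1 ≤ p.1 ∧ p.1 < p.2 ∧ p.2 ≤ n - 1 ∧ ¬(p.1 = 1 ∧ p.2 = n - 1)

instance (n : ℕ) : DecidablePred (ChordP n) := fun p => by
  unfold ChordP; infer_instance

/-- The set `C_n` of chords of the `n`-gon, as a type. -/
def GChord (n : ℕ) : Type := {p : ℕ × ℕ // ChordP n p}

noncomputable instance (n : ℕ) : LinearOrder (GChord n) :=
  LinearOrder.lift' (fun c : {p : ℕ × ℕ // ChordP n p} => toLex c.val)
    (fun a b h => Subtype.ext (toLex.injective h))

/-- `{i, j} ∈ D`, for a diagram `D` of chords. -/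
def memPair {n : ℕ} (D : Finset (GChord n)) (i j : ℕ) : Prop :=
  ∃ c ∈ D, c.val = (i, j)

/-- A gravity (chord) diagram: a subset of `C_n` containing no pair `{i,j}, {j,k}`
with `i < j < k` and no triple `{i,k}, {j,k}, {j,l}` with `i < j < k < l`. -/
def IsGravityDiagram {n : ℕ} (D : Finset (GChord n)) : Prop :=
  (¬ ∃ i j k : ℕ, i < j ∧ j < k ∧ memPair D i j ∧ memPair D j k) ∧
  (¬ ∃ i j k l : ℕ, i < j ∧ j < k ∧ k < l ∧
      memPair D i k ∧ memPair D j k ∧ memPair D j l)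

/-- The exterior algebra `Λ_n` over `ℚ` on generators `e_c`, `c ∈ C_n`. -/
abbrev GravAlg (n : ℕ) : Type := ExteriorAlgebra ℚ (GChord n →₀ ℚ)

/-- The generator `e_c` of `Λ_n`. -/
noncomputable def e {n : ℕ} (c : GChord n) : GravAlg n :=
  ExteriorAlgebra.ι ℚ (Finsupp.single c 1)

/-- The monomial `e_S = ∏_{c ∈ S} e_c`, the product taken in the fixed (lexicographic)
order on chords. -/
noncomputable def eMon {n : ℕ} (S : Finset (GChord n)) : GravAlg n :=
  ((S.sort (· ≤ ·)).map e).prod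

/-- `eIf p` is the generator `e_p` if the pair `p` lies in `C_n`, and `0` otherwise. -/
noncomputable def eIf (n : ℕ) (p : ℕ × ℕ) : GravAlg n :=
  if h : ChordP n p then e ⟨p, h⟩ else 0

/-- The defining property of the change-of-basis endomorphism `u` of `Λ_n`:
`u(e_{i,j}) = e_{i,j} + e_{i-1,j+1} - e_{i-1,j} - e_{i,j+1}`, where terms whose index
pair does not lie in `C_n` are omitted. -/
def IsChangeOfBasis {n : ℕ} (u : GravAlg n →ₐ[ℚ] GravAlg n) : Prop :=
  ∀ c : GChord n, u (e c) =
    eIf n (c.val.1, c.val.2) + eIf n (c.val.1 - 1, c.val.2 + 1)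
      - eIf n (c.val.1 - 1, c.val.2) - eIf n (c.val.1, c.val.2 + 1)


noncomputable def sIf (n : ℕ) (p : ℕ × ℕ) : GChord n →₀ ℚ :=
  if h : ChordP n p then Finsupp.single ⟨p, h⟩ 1 else 0

lemma ι_sIf (n : ℕ) (p : ℕ × ℕ) : ExteriorAlgebra.ι ℚ (sIf n p) = eIf n p := by
  unfold sIf eIf
  split <;> simp [e]

noncomputable def vmap (n : ℕ) (c : GChord n) : GChord n →₀ ℚ :=
  sIf n (c.val.1, c.val.2) + sIf n (c.val.1 - 1, c.val.2 + 1)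
    - sIf n (c.val.1 - 1, c.val.2) - sIf n (c.val.1, c.val.2 + 1)

noncomputable def fmap (n : ℕ) : (GChord n →₀ ℚ) →ₗ[ℚ] (GChord n →₀ ℚ) :=
  Finsupp.linearCombination ℚ (vmap n)

lemma fmap_single (n : ℕ) (c : GChord n) : fmap n (Finsupp.single c 1) = vmap n c := by
  simp [fmap]

/-- The submodule of elements supported on chords of length at least `m`. -/
noncomputable def lenSupp (n m : ℕ) : Submodule ℚ (GChord n →₀ ℚ) :=
  Finsupp.supported ℚ ℚ {c : GChord n | m ≤ c.val.2 - c.val.1}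

lemma sIf_mem_lenSupp (n m : ℕ) (p : ℕ × ℕ) (h : m ≤ p.2 - p.1) :
    sIf n p ∈ lenSupp n m := by
  unfold sIf
  split
  · exact Finsupp.single_mem_supported ℚ 1 h
  · exact Submodule.zero_mem _

lemma nstep (n m : ℕ) (x : GChord n →₀ ℚ) (hx : x ∈ lenSupp n m) :
    (fmap n - 1) x ∈ lenSupp n (m + 1) := by
  have hsp : lenSupp n m = Submodule.span ℚ
      ((fun c => Finsupp.single c (1 : ℚ)) '' {c : GChord n | m ≤ c.val.2 - c.val.1}) := by
    exact Finsupp.supported_eq_span_single ℚ {c : GChord n | m ≤ c.val.2 - c.val.1}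
  rw [hsp] at hx
  induction hx using Submodule.span_induction with
  | mem y hy =>
    obtain ⟨c, hc, rfl⟩ := hy
    obtain ⟨h1, h2, h3, h4⟩ := c.property
    have hc' : m ≤ c.val.2 - c.val.1 := hc
    have hkey : (fmap n - 1) (Finsupp.single c 1)
        = sIf n (c.val.1 - 1, c.val.2 + 1) - sIf n (c.val.1 - 1, c.val.2)
          - sIf n (c.val.1, c.val.2 + 1) := by
      have hself : sIf n (c.val.1, c.val.2) = Finsupp.single c 1 := by
        unfold sIf
        rw [dif_pos]
        · congr
        · exact c.property
      simp only [LinearMap.sub_apply, Module.End.one_apply, fmap_single, vmap, hself]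
      abel
    rw [hkey]
    refine Submodule.sub_mem _ (Submodule.sub_mem _ ?_ ?_) ?_ <;>
      apply sIf_mem_lenSupp <;> simp <;> omega
  | zero => simpa using Submodule.zero_mem (lenSupp n (m + 1))
  | add y z _ _ hy hz => simpa [sub_add_sub_comm] using Submodule.add_mem _ hy hz
  | smul r y _ hy => simpa using Submodule.smul_mem _ r hy

lemma powMem (n k : ℕ) (x : GChord n →₀ ℚ) :
    ((fmap n - 1) ^ k) x ∈ lenSupp n k := by
  induction k with
  | zero =>
    intro c _
    exact Nat.zero_le _
  | succ k ih =>
    rw [pow_succ']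
    exact nstep n k _ ih

lemma nilp (n : ℕ) : (fmap n - 1) ^ n = 0 := by
  apply LinearMap.ext
  intro x
  have h := powMem n n x
  simp only [LinearMap.zero_apply]
  ext c
  by_contra hc
  have hmem : c ∈ (((fmap n - 1) ^ n) x).support := by
    rw [Finsupp.mem_support_iff]
    simpa using hc
  have hlen : n ≤ c.val.2 - c.val.1 := h hmem
  obtain ⟨h1, h2, h3, h4⟩ := c.property
  omega

lemma fmap_bijective (n : ℕ) : Function.Bijective (fmap n) := by
  have h1 : IsNilpotent (fmap n - 1) := ⟨n, nilp n⟩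
  have h2 : IsUnit (1 + (fmap n - 1)) := h1.isUnit_one_add
  rw [add_sub_cancel] at h2
  exact (Module.End.isUnit_iff (fmap n)).mp h2

/-- for every `n ≥ 3`, the algebra endomorphism `u` of `Λ_n` determined by
`u(e_{i,j}) = e_{i,j} + e_{i-1,j+1} - e_{i-1,j} - e_{i,j+1}` (terms not in `C_n` omitted)
is bijective, i.e. an algebra automorphism of `Λ_n`. -/
theorem changeOfBasis_bijective (n : ℕ) (hn : 3 ≤ n)
    (u : GravAlg n →ₐ[ℚ] GravAlg n) (hu : IsChangeOfBasis u) :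
    Function.Bijective u := by
  -- u coincides with the functorial map of `fmap n`
  have hmap : u = ExteriorAlgebra.map (fmap n) := by
    apply ExteriorAlgebra.hom_ext
    apply Finsupp.lhom_ext'
    intro c
    apply LinearMap.ext_ring
    simp only [LinearMap.coe_comp, Function.comp_apply, Finsupp.lsingle_apply,
      AlgHom.toLinearMap_apply, ExteriorAlgebra.map_apply_ι, fmap_single]
    have := hu c
    rw [show ExteriorAlgebra.ι ℚ (Finsupp.single c 1) = e c from rfl, this, vmap]
    simp only [map_add, map_sub, ι_sIf]
  obtain ⟨g, hgf, hfg⟩ : ∃ g : (GChord n →₀ ℚ) →ₗ[ℚ] (GChord n →₀ ℚ),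
      g ∘ₗ fmap n = LinearMap.id ∧ fmap n ∘ₗ g = LinearMap.id := by
    have hb := fmap_bijective n
    let fe := LinearEquiv.ofBijective (fmap n) hb
    refine ⟨fe.symm.toLinearMap, ?_, ?_⟩ <;> refine LinearMap.ext fun x => ?_ <;>
      simp only [LinearMap.coe_comp, Function.comp_apply, LinearMap.id_apply,
        LinearEquiv.coe_coe]
    · exact fe.symm_apply_apply x
    · exact fe.apply_symm_apply x
  rw [hmap]
  constructor
  · intro a b hab
    have : ExteriorAlgebra.map g (ExteriorAlgebra.map (fmap n) a)
        = ExteriorAlgebra.map g (ExteriorAlgebra.map (fmap n) b) := by rw [hab]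
    rwa [← AlgHom.comp_apply, ← AlgHom.comp_apply, ExteriorAlgebra.map_comp_map, hgf,
      ExteriorAlgebra.map_id, AlgHom.id_apply, AlgHom.id_apply] at this
  · intro y
    refine ⟨ExteriorAlgebra.map g y, ?_⟩
    rw [← AlgHom.comp_apply, ExteriorAlgebra.map_comp_map, hfg, ExteriorAlgebra.map_id,
      AlgHom.id_apply]
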